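/- Let τ be in the upper half-plane ℍ and r, s ∈ ℝ. Then: (1) if r + sτ ∉ Λ_τ, then Z_{r,s}(τ + 1) = Z_{r+s, s}(τ); (2) if −s + rτ ∉ Λ_τ, then Z_{r,s}(−1/τ) = τ · Z_{−s, r}(τ). (In particular the Hecke function transforms like a modular form of weight one under SL(2, ℤ), with the index (r, s) transformed accordingly.) -/

import Mathlib

set_option maxHeartbeats 1000000

noncomputable section

/-- The lattice point `m ω₁ + n ω₂` attached to an integer pair. -/
def latPt (ω₁ ω₂ : ℂ) (p : ℤ × ℤ) : ℂ := p.1 * ω₁ + p.2 * ω₂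

/-- Membership in the lattice `Λ = ℤω₁ + ℤω₂`. -/
def IsLatticePt (ω₁ ω₂ z : ℂ) : Prop := ∃ m n : ℤ, z = m * ω₁ + n * ω₂

/-- The Weierstrass `℘`-function of the lattice `ℤω₁ + ℤω₂`. -/
def wp (ω₁ ω₂ : ℂ) (z : ℂ) : ℂ :=
  1 / z ^ 2 + ∑' p : {p : ℤ × ℤ // p ≠ 0},
    (1 / (z - latPt ω₁ ω₂ p.1) ^ 2 - 1 / (latPt ω₁ ω₂ p.1) ^ 2)

/-- The Weierstrass `ζ`-function of the lattice `ℤω₁ + ℤω₂`. -/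
def wzeta (ω₁ ω₂ : ℂ) (z : ℂ) : ℂ :=
  1 / z + ∑' p : {p : ℤ × ℤ // p ≠ 0},
    (1 / (z - latPt ω₁ ω₂ p.1) + 1 / latPt ω₁ ω₂ p.1 + z / (latPt ω₁ ω₂ p.1) ^ 2)

/-- The derivative `℘'` of the Weierstrass `℘`-function. -/
def wpDeriv (ω₁ ω₂ : ℂ) : ℂ → ℂ := deriv (wp ω₁ ω₂)

/-- The quasi-period `η₁(τ) = 2ζ(1/2)` of the lattice `Λ_τ = ℤ + ℤτ`. -/
def eta1 (τ : ℂ) : ℂ := 2 * wzeta 1 τ (1 / 2)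

/-- The quasi-period `η₂(τ) = 2ζ(τ/2)` of the lattice `Λ_τ = ℤ + ℤτ`. -/
def eta2 (τ : ℂ) : ℂ := 2 * wzeta 1 τ (τ / 2)

/-- The Hecke function `Z_{r,s}(τ) = ζ(r + sτ; Λ_τ) − r η₁(τ) − s η₂(τ)`. -/
def heckeZ (r s : ℝ) (τ : ℂ) : ℂ :=
  wzeta 1 τ ((r : ℂ) + (s : ℂ) * τ) - (r : ℂ) * eta1 τ - (s : ℂ) * eta2 τ

open Complex EisensteinSeries

/-- The summand of the Weierstrass zeta function, as a function on all of `ℤ × ℤ`. -/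
def Gz (τ z : ℂ) (p : ℤ × ℤ) : ℂ :=
  1 / (z - latPt 1 τ p) + 1 / latPt 1 τ p + z / (latPt 1 τ p) ^ 2

lemma latPt_def (τ : ℂ) (p : ℤ × ℤ) : latPt 1 τ p = (p.1 : ℂ) + (p.2 : ℂ) * τ := by
  simp [latPt]

lemma Gz_zero (τ z : ℂ) : Gz τ z 0 = 1 / z := by
  simp [Gz, latPt]

lemma summable_Gz {τ : ℂ} (hτ : 0 < τ.im) (z : ℂ) : Summable (Gz τ z) := by
  classical
  set ζ : UpperHalfPlane := ⟨τ, hτ⟩ with hζ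
  have hr0 : 0 < r ζ := r_pos ζ
  set E : ℤ × ℤ ≃ (Fin 2 → ℤ) := (Equiv.prodComm ℤ ℤ).trans (finTwoArrowEquiv ℤ).symm with hE
  have hEapp : ∀ p : ℤ × ℤ, E p = ![p.2, p.1] := fun p => rfl
  have hsum : Summable fun p : ℤ × ℤ => ‖E p‖ ^ (-(3 : ℝ)) :=
    E.summable_iff.mpr (summable_one_div_norm_rpow (by norm_num))
  set C : ℝ := 2 * ‖z‖ ^ 2 / r ζ ^ 3 with hC
  set B : ℝ := (2 * ‖z‖ + 1) / r ζ with hB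
  have hBpos : 0 < B := div_pos (by positivity) hr0
  apply Summable.of_norm_bounded_eventually (g := fun p => C * ‖E p‖ ^ (-(3 : ℝ))) (hsum.mul_left C)
  rw [Filter.eventually_cofinite]
  have hfin : {p : ℤ × ℤ | ¬ B ≤ ‖E p‖}.Finite := by
    apply Set.Finite.subset (Set.finite_Icc ((-(⌈B⌉₊ : ℤ), -(⌈B⌉₊ : ℤ))) ((⌈B⌉₊ : ℤ), (⌈B⌉₊ : ℤ)))
    intro p hp
    simp only [Set.mem_setOf_eq, not_le] at hp
    rw [hEapp, norm_eq_max_natAbs] at hp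
    simp only [Matrix.cons_val_zero, Matrix.cons_val_one, Matrix.head_cons] at hp
    have h1 : (p.2.natAbs : ℝ) < B :=
      lt_of_le_of_lt (by exact_mod_cast Nat.cast_le.mpr (le_max_left p.2.natAbs p.1.natAbs)) hp
    have h2 : (p.1.natAbs : ℝ) < B :=
      lt_of_le_of_lt (by exact_mod_cast Nat.cast_le.mpr (le_max_right p.2.natAbs p.1.natAbs)) hp
    have h1' : p.2.natAbs ≤ ⌈B⌉₊ := by
      have := h1.le.trans (Nat.le_ceil B)
      exact_mod_cast this
    have h2' : p.1.natAbs ≤ ⌈B⌉₊ := by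
      have := h2.le.trans (Nat.le_ceil B)
      exact_mod_cast this
    have ha1 : |p.1| ≤ (⌈B⌉₊ : ℤ) := by
      rw [Int.abs_eq_natAbs]; exact_mod_cast h2'
    have ha2 : |p.2| ≤ (⌈B⌉₊ : ℤ) := by
      rw [Int.abs_eq_natAbs]; exact_mod_cast h1'
    rw [Set.mem_Icc]
    obtain ⟨hb1, hb1'⟩ := abs_le.mp ha1
    obtain ⟨hb2, hb2'⟩ := abs_le.mp ha2
    exact ⟨⟨hb1, hb2⟩, ⟨hb1', hb2'⟩⟩
  apply hfin.subset
  intro p hp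
  simp only [Set.mem_setOf_eq] at hp ⊢
  intro hBle
  apply hp
  -- now prove the bound assuming B ≤ ‖E p‖
  have hnp : 0 < ‖E p‖ := lt_of_lt_of_le hBpos hBle
  have hx : E p ≠ 0 := by
    intro h
    rw [h, norm_zero] at hnp
    exact lt_irrefl _ hnp
  have hA := r_mul_max_le ζ hx
  have hE0 : (E p) 0 = p.2 := by rw [hEapp]; rfl
  have hE1 : (E p) 1 = p.1 := by rw [hEapp]; rfl
  rw [hE0, hE1] at hA
  have hcoe : (ζ : ℂ) = τ := rfl
  rw [hcoe] at hA
  have hlat : ((p.2 : ℂ) * τ + (p.1 : ℂ)) = latPt 1 τ p := by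
    rw [latPt_def]; ring
  rw [hlat] at hA
  have hA' : r ζ * ‖E p‖ ≤ ‖latPt 1 τ p‖ := by
    exact hA
  set N : ℝ := ‖latPt 1 τ p‖ with hN
  have h2a : 2 * ‖z‖ + 1 ≤ r ζ * ‖E p‖ := by
    calc 2 * ‖z‖ + 1 = (2 * ‖z‖ + 1) / r ζ * r ζ := (div_mul_cancel₀ _ hr0.ne').symm
      _ ≤ ‖E p‖ * r ζ := mul_le_mul_of_nonneg_right hBle hr0.le
      _ = r ζ * ‖E p‖ := mul_comm _ _
  have h2aN : 2 * ‖z‖ + 1 ≤ N := h2a.trans hA'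
  have hNpos : 0 < N := by nlinarith [norm_nonneg z]
  have hLne : latPt 1 τ p ≠ 0 := by
    intro h
    rw [hN, h, norm_zero] at hNpos
    exact lt_irrefl _ hNpos
  have hzLne : z - latPt 1 τ p ≠ 0 := by
    intro h
    have hz : z = latPt 1 τ p := by linear_combination h
    rw [hN, ← hz] at h2aN
    nlinarith [norm_nonneg z]
  have hhalf : N / 2 ≤ ‖z - latPt 1 τ p‖ := by
    have h1 : N - ‖z‖ ≤ ‖latPt 1 τ p - z‖ := norm_sub_norm_le _ _
    rw [norm_sub_rev] at h1
    nlinarith [norm_nonneg z]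
  have hzLpos : (0 : ℝ) < ‖z - latPt 1 τ p‖ := norm_pos_iff.mpr hzLne
  have hG : Gz τ z p = z ^ 2 / ((latPt 1 τ p) ^ 2 * (z - latPt 1 τ p)) := by
    rw [Gz]
    field_simp
    ring
  have hrEpos : 0 < r ζ * ‖E p‖ := mul_pos hr0 hnp
  have hrpow : ‖E p‖ ^ (-(3 : ℝ)) = (‖E p‖ ^ (3 : ℕ))⁻¹ := by
    rw [show (-(3 : ℝ)) = -((3 : ℕ) : ℝ) by norm_num, Real.rpow_neg (norm_nonneg _),
      Real.rpow_natCast]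
  rw [hG, hrpow, norm_div, norm_mul, norm_pow, norm_pow]
  calc ‖z‖ ^ 2 / (N ^ 2 * ‖z - latPt 1 τ p‖)
      ≤ ‖z‖ ^ 2 / (N ^ 2 * (N / 2)) := by
        apply div_le_div_of_nonneg_left (by positivity)
          (mul_pos (pow_pos hNpos 2) (by linarith))
        exact mul_le_mul_of_nonneg_left hhalf (by positivity)
    _ = 2 * ‖z‖ ^ 2 / N ^ 3 := by
        rw [div_eq_div_iff (mul_pos (pow_pos hNpos 2) (by linarith : (0:ℝ) < N / 2)).ne' (pow_pos hNpos 3).ne']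
        ring
    _ ≤ 2 * ‖z‖ ^ 2 / (r ζ * ‖E p‖) ^ 3 := by
        apply div_le_div_of_nonneg_left (by positivity) (pow_pos hrEpos 3)
        exact pow_le_pow_left₀ hrEpos.le hA' 3
    _ = C * (‖E p‖ ^ (3 : ℕ))⁻¹ := by
        rw [hC, div_eq_mul_inv, div_eq_mul_inv, mul_pow, mul_inv]
        ring

/-- Express `wzeta` as a sum over all of `ℤ × ℤ`. -/
lemma wzeta_tsum {τ : ℂ} (hτ : 0 < τ.im) (z : ℂ) :
    wzeta 1 τ z = ∑' p : ℤ × ℤ, Gz τ z p := by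
  classical
  have hsub : (∑' p : {p : ℤ × ℤ // p ≠ 0}, Gz τ z p.1)
      = ∑' p : ℤ × ℤ, (if p = 0 then 0 else Gz τ z p) := by
    rw [← Function.Injective.tsum_eq (Subtype.val_injective)
      (f := fun p : ℤ × ℤ => if p = 0 then 0 else Gz τ z p) ?_]
    · exact tsum_congr fun p => (if_neg p.2).symm
    · intro x hx
      rcases eq_or_ne x 0 with h | h
      · simp [h] at hx
      · exact ⟨⟨x, h⟩, rfl⟩
  have hdef : wzeta 1 τ z = 1 / z + ∑' p : {p : ℤ × ℤ // p ≠ 0}, Gz τ z p.1 := rfl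
  rw [hdef, hsub]
  conv_rhs => rw [Summable.tsum_eq_add_tsum_ite (summable_Gz hτ z) 0]
  rw [Gz_zero]

/-- Oddness of `wzeta`. -/
lemma wzeta_neg {τ : ℂ} (hτ : 0 < τ.im) (z : ℂ) :
    wzeta 1 τ (-z) = - wzeta 1 τ z := by
  rw [wzeta_tsum hτ, wzeta_tsum hτ, ← tsum_neg,
    ← (Equiv.neg (ℤ × ℤ)).tsum_eq (fun p => - Gz τ z p)]
  apply tsum_congr
  intro p
  have hl : latPt 1 τ ((Equiv.neg (ℤ × ℤ)) p) = - latPt 1 τ p := by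
    simp only [Equiv.neg_apply, latPt_def, Prod.fst_neg, Prod.snd_neg]
    push_cast
    ring
  simp only [Gz, hl]
  rw [show z - -latPt 1 τ p = -(-z - latPt 1 τ p) from by ring,
    show (-latPt 1 τ p) ^ 2 = (latPt 1 τ p) ^ 2 from by ring,
    div_neg, div_neg]
  ring

lemma latPt_sub (τ : ℂ) (p e : ℤ × ℤ) :
    latPt 1 τ (p - e) = latPt 1 τ p - latPt 1 τ e := by
  simp only [latPt_def, Prod.fst_sub, Prod.snd_sub]
  push_cast
  ring

/-- Quasi-periodicity of `wzeta` with respect to any lattice point. -/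
lemma wzeta_qp {τ : ℂ} (hτ : 0 < τ.im) (e : ℤ × ℤ) (z : ℂ) :
    wzeta 1 τ (z + latPt 1 τ e) = wzeta 1 τ z + 2 * wzeta 1 τ (latPt 1 τ e / 2) := by
  set η : ℂ := latPt 1 τ e with hη
  have hsummC : ∀ w : ℂ, Summable fun p : ℤ × ℤ => Gz τ (w + η) p - Gz τ w (p - e) := by
    intro w
    apply Summable.sub (summable_Gz hτ (w + η))
    exact (Equiv.subRight e).summable_iff.mpr (summable_Gz hτ w)
  have key : ∀ w : ℂ, wzeta 1 τ (w + η) - wzeta 1 τ w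
      = ∑' p : ℤ × ℤ, (Gz τ (w + η) p - Gz τ w (p - e)) := by
    intro w
    rw [wzeta_tsum hτ, wzeta_tsum hτ,
      ← (Equiv.subRight e).tsum_eq (Gz τ w)]
    exact (Summable.tsum_sub (summable_Gz hτ (w + η))
      ((Equiv.subRight e).summable_iff.mpr (summable_Gz hτ w))).symm
  have hd0 : (∑' p : ℤ × ℤ, (1 / latPt 1 τ p ^ 2 - 1 / (latPt 1 τ p - η) ^ 2)) = 0 := by
    set d : ℤ × ℤ → ℂ := fun p => 1 / latPt 1 τ p ^ 2 - 1 / (latPt 1 τ p - η) ^ 2 with hdd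
    have h2 : ∀ p : ℤ × ℤ, d ((Equiv.subLeft e) p) = - d p := by
      intro p
      have hl : latPt 1 τ ((Equiv.subLeft e) p) = η - latPt 1 τ p := by
        have : (Equiv.subLeft e) p = e - p := rfl
        rw [this, latPt_sub, hη]
      rw [hdd]
      simp only [hl]
      rw [show (η - latPt 1 τ p) ^ 2 = (latPt 1 τ p - η) ^ 2 from by ring,
        show (η - latPt 1 τ p - η) ^ 2 = (latPt 1 τ p) ^ 2 from by ring]
      ring
    have h1 : ∑' p, d p = ∑' p, d ((Equiv.subLeft e) p) := ((Equiv.subLeft e).tsum_eq d).symm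
    rw [funext h2, tsum_neg] at h1
    linear_combination h1 / 2
  have hdiff : ∀ w w' : ℂ, (∑' p : ℤ × ℤ, (Gz τ (w + η) p - Gz τ w (p - e)))
      = ∑' p : ℤ × ℤ, (Gz τ (w' + η) p - Gz τ w' (p - e)) := by
    intro w w'
    have hkey2 : (∑' p : ℤ × ℤ, ((Gz τ (w + η) p - Gz τ w (p - e))
        - (Gz τ (w' + η) p - Gz τ w' (p - e)))) = 0 := by
      have hcongr : ∀ p : ℤ × ℤ, (Gz τ (w + η) p - Gz τ w (p - e))
          - (Gz τ (w' + η) p - Gz τ w' (p - e))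
          = (w - w') * (1 / latPt 1 τ p ^ 2 - 1 / (latPt 1 τ p - η) ^ 2) := by
        intro p
        simp only [Gz, latPt_sub, ← hη]
        rw [show w - (latPt 1 τ p - η) = w + η - latPt 1 τ p from by ring,
          show w' - (latPt 1 τ p - η) = w' + η - latPt 1 τ p from by ring]
        ring
      rw [tsum_congr hcongr, tsum_mul_left, hd0, mul_zero]
    have hts := Summable.tsum_sub (hsummC w) (hsummC w')
    rw [hkey2] at hts
    linear_combination -hts
  have h1 := key z
  have h2 := key (-(η / 2))
  rw [hdiff z (-(η / 2))] at h1
  have h3 : -(η / 2) + η = η / 2 := by ring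
  rw [h3] at h1
  have h4 : wzeta 1 τ (-(η / 2)) = - wzeta 1 τ (η / 2) := wzeta_neg hτ _
  rw [h3, h4] at h2
  rw [← h2] at h1
  linear_combination h1

/-- The half-period relation. -/
lemma wzeta_half {τ : ℂ} (hτ : 0 < τ.im) :
    2 * wzeta 1 τ ((τ + 1) / 2) = 2 * wzeta 1 τ (1 / 2) + 2 * wzeta 1 τ (τ / 2) := by
  have hl1 : latPt 1 τ ((1 : ℤ), (0 : ℤ)) = 1 := by simp [latPt]
  have hl2 : latPt 1 τ ((0 : ℤ), (-1 : ℤ)) = -τ := by simp [latPt]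
  have e1 := wzeta_qp hτ ((1 : ℤ), (0 : ℤ)) ((τ - 1) / 2)
  have e2 := wzeta_qp hτ ((0 : ℤ), (-1 : ℤ)) ((τ + 1) / 2)
  rw [hl1] at e1
  rw [hl2] at e2
  have h3 : (τ - 1) / 2 + 1 = (τ + 1) / 2 := by ring
  have h4 : (τ + 1) / 2 + -τ = -((τ - 1) / 2) := by ring
  have h5 : (-τ : ℂ) / 2 = -(τ / 2) := by ring
  rw [h3] at e1
  rw [h4, h5, wzeta_neg hτ ((τ - 1) / 2), wzeta_neg hτ (τ / 2)] at e2
  linear_combination e1 - e2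

/-- The index shift realising `τ ↦ τ + 1`. -/
def shiftEquiv : ℤ × ℤ ≃ ℤ × ℤ where
  toFun p := (p.1 + p.2, p.2)
  invFun p := (p.1 - p.2, p.2)
  left_inv p := by simp
  right_inv p := by simp

/-- The index rotation realising `τ ↦ -1/τ`. -/
def rotEquiv : ℤ × ℤ ≃ ℤ × ℤ where
  toFun p := (-p.2, p.1)
  invFun p := (p.2, -p.1)
  left_inv p := by simp
  right_inv p := by simp

/-- Invariance of `wzeta` under `τ ↦ τ + 1`. -/
lemma wzeta_T {τ : ℂ} (hτ : 0 < τ.im) (z : ℂ) :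
    wzeta 1 (τ + 1) z = wzeta 1 τ z := by
  have hτ1 : 0 < (τ + 1).im := by simpa using hτ
  rw [wzeta_tsum hτ1 z, wzeta_tsum hτ z, ← shiftEquiv.tsum_eq (Gz τ z)]
  apply tsum_congr
  intro p
  have hσ : shiftEquiv p = (p.1 + p.2, p.2) := rfl
  have h : latPt 1 (τ + 1) p = latPt 1 τ (shiftEquiv p) := by
    rw [hσ, latPt_def, latPt_def]
    push_cast
    ring
  simp only [Gz, h]

/-- Scaling behaviour of `wzeta` under `τ ↦ -1/τ`. -/
lemma wzeta_S {τ : ℂ} (hτ : 0 < τ.im) (z : ℂ) :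
    wzeta 1 (-1 / τ) z = τ * wzeta 1 τ (τ * z) := by
  have hτ0 : τ ≠ 0 := by
    intro h
    rw [h] at hτ
    simp at hτ
  have hτ' : 0 < (-1 / τ).im := by
    rw [neg_div, one_div, Complex.neg_im, Complex.inv_im, neg_div, neg_neg]
    exact div_pos hτ (normSq_pos.mpr hτ0)
  rw [wzeta_tsum hτ' z, wzeta_tsum hτ (τ * z), ← tsum_mul_left,
    ← rotEquiv.tsum_eq (fun p => τ * Gz τ (τ * z) p)]
  apply tsum_congr
  intro p
  have hσ : rotEquiv p = (-p.2, p.1) := rfl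
  have hω : latPt 1 (-1 / τ) p = τ⁻¹ * latPt 1 τ (rotEquiv p) := by
    rw [hσ, latPt_def, latPt_def]
    push_cast
    field_simp
    ring
  set ω : ℂ := latPt 1 τ (rotEquiv p) with hωdef
  have h1 : 1 / (z - τ⁻¹ * ω) = τ * (1 / (τ * z - ω)) := by
    rcases eq_or_ne (τ * z - ω) 0 with h | h
    · have hω' : ω = τ * z := by linear_combination -h
      have hzz : z - τ⁻¹ * ω = 0 := by
        rw [hω', ← mul_assoc, inv_mul_cancel₀ hτ0, one_mul, sub_self]
      rw [hzz, h]
      simp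
    · have hzz : z - τ⁻¹ * ω = τ⁻¹ * (τ * z - ω) := by
        rw [mul_sub, ← mul_assoc, inv_mul_cancel₀ hτ0, one_mul]
      rw [hzz, one_div, mul_inv, inv_inv, one_div]
  have h2 : 1 / (τ⁻¹ * ω) = τ * (1 / ω) := by
    rw [one_div, mul_inv, inv_inv, one_div]
  have h3 : z / (τ⁻¹ * ω) ^ 2 = τ * (τ * z / ω ^ 2) := by
    rcases eq_or_ne ω 0 with h | h
    · simp [h]
    · field_simp
  simp only [Gz, hω, ← hωdef]
  rw [h1, h2, h3]
  ring

/-- modular transformation of the Hecke function: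
`Z_{r,s}(τ+1) = Z_{r+s,s}(τ)` and `Z_{r,s}(−1/τ) = τ Z_{−s,r}(τ)`. -/
theorem stmt12 (τ : ℂ) (hτ : 0 < τ.im) (r s : ℝ) :
    (¬ IsLatticePt 1 τ ((r : ℂ) + (s : ℂ) * τ) →
      heckeZ r s (τ + 1) = heckeZ (r + s) s τ) ∧
    (¬ IsLatticePt 1 τ (-(s : ℂ) + (r : ℂ) * τ) →
      heckeZ r s (-1 / τ) = τ * heckeZ (-s) r τ) := by
  constructor
  · intro _
    simp only [heckeZ, eta1, eta2, wzeta_T hτ]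
    have harg : (r : ℂ) + (s : ℂ) * (τ + 1) = ((r + s : ℝ) : ℂ) + (s : ℂ) * τ := by
      push_cast
      ring
    rw [harg]
    have hh := wzeta_half hτ
    push_cast
    linear_combination (-(s : ℂ)) * hh
  · intro _
    have hτ0 : τ ≠ 0 := by
      intro h
      rw [h] at hτ
      simp at hτ
    simp only [heckeZ, eta1, eta2, wzeta_S hτ]
    have k1 : τ * ((r : ℂ) + (s : ℂ) * (-1 / τ)) = -(s : ℂ) + (r : ℂ) * τ := by
      field_simp
      ring
    have k2 : τ * (1 / 2 : ℂ) = τ / 2 := by ring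
    have k3 : τ * (-1 / τ / 2) = -(1 / 2 : ℂ) := by
      field_simp
    rw [k1, k2, k3, wzeta_neg hτ (1 / 2)]
    push_cast
    ring
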